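/- (Kick-back Gronwall step) Let (e_n)_{n=0}^N be nonnegative reals, k > 0, t_n = nk ≤ T, and suppose e_n ≤ a + C ∑_{j=1}^{n} k · t_{n-j+1}^{-3/4} e_j for all 1 ≤ n ≤ N, with e_0 ≤ a. If k is small enough that C k^{1/4}·4 < 1/2 (so the j = n term can be absorbed), then there is a constant C' depending only on C and T such that e_n ≤ C' a for all 0 ≤ n ≤ N. -/

import Mathlib

lemma tel (i : ℕ) (hi : 1 ≤ i) :
    ((i:ℝ))^(-(3:ℝ)/4) ≤ 4*((i:ℝ)^((1:ℝ)/4) - ((i:ℝ)-1)^((1:ℝ)/4)) := by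
  have hi1 : (1:ℝ) ≤ (i:ℝ) := by exact_mod_cast hi
  have hi0 : (0:ℝ) < (i:ℝ) := by linarith
  set x := (i:ℝ)^((1:ℝ)/4) with hxdef
  set y := ((i:ℝ)-1)^((1:ℝ)/4) with hydef
  have hx0 : 0 < x := Real.rpow_pos_of_pos hi0 _
  have hy0 : 0 ≤ y := Real.rpow_nonneg (by linarith) _
  have hyx : y ≤ x := Real.rpow_le_rpow (by linarith) (by linarith) (by norm_num)
  have hx4 : x^(4:ℕ) = (i:ℝ) := by
    rw [hxdef, ← Real.rpow_natCast (_ ^ _) 4, ← Real.rpow_mul hi0.le]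
    norm_num
  have hy4 : y^(4:ℕ) = (i:ℝ)-1 := by
    rw [hydef, ← Real.rpow_natCast (_ ^ _) 4, ← Real.rpow_mul (by linarith)]
    norm_num
  have hx3 : x^(3:ℕ) = (i:ℝ)^((3:ℝ)/4) := by
    rw [hxdef, ← Real.rpow_natCast (_ ^ _) 3, ← Real.rpow_mul hi0.le]
    norm_num
  have hmul : (i:ℝ)^(-(3:ℝ)/4) * x^(3:ℕ) = 1 := by
    rw [hx3, ← Real.rpow_add hi0]; norm_num
  have key : 1 ≤ 4*(x-y)*x^(3:ℕ) := by
    nlinarith [mul_nonneg (sub_nonneg.mpr hyx) (mul_nonneg hy0 hy0),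
      mul_nonneg (sub_nonneg.mpr hyx) (mul_nonneg hx0.le hy0),
      mul_nonneg (mul_nonneg (sub_nonneg.mpr hyx) hy0) hy0,
      sq_nonneg (x-y), sq_nonneg (x+y), hx0, hy0]
  have hx3pos : (0:ℝ) < x^(3:ℕ) := by positivity
  nlinarith [mul_pos hx3pos hx3pos]

lemma telsum (M : ℕ) : ∑ i ∈ Finset.Icc 1 M, ((i:ℝ))^(-(3:ℝ)/4) ≤ 4*(M:ℝ)^((1:ℝ)/4) := by
  induction M with
  | zero => simp
  | succ M ih =>
    rw [Finset.sum_Icc_succ_top (by omega)]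
    have h := tel (M+1) (by omega)
    have hc : ((M+1:ℕ):ℝ) - 1 = (M:ℝ) := by push_cast; ring
    rw [hc] at h
    push_cast at h ⊢
    linarith

lemma geoms (r : ℝ) (hr : 1 < r) (m n : ℕ) (hmn : m < n) :
    ∑ j ∈ Finset.Icc 1 m, r^j ≤ r^n/(r-1) := by
  have h1 : ∑ j ∈ Finset.Icc 1 m, r^j ≤ ∑ j ∈ Finset.range n, r^j := by
    apply Finset.sum_le_sum_of_subset_of_nonneg
    · intro j hj
      simp only [Finset.mem_Icc] at hj
      simp only [Finset.mem_range]; omega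
    · intro j _ _; positivity
  have h2 : ∑ j ∈ Finset.range n, r^j = (r^n - 1)/(r-1) := geom_sum_eq (ne_of_gt hr) n
  rw [h2] at h1
  have h3 : (r^n - 1)/(r-1) ≤ r^n/(r-1) := by
    gcongr
    · linarith
  linarith

lemma kk (k:ℝ) (hk : 0<k) : k * k ^ (-(3:ℝ)/4) = k^((1:ℝ)/4) := by
  rw [show ((1:ℝ)/4) = 1 + (-(3:ℝ)/4) by norm_num, Real.rpow_add hk, Real.rpow_one]

set_option maxHeartbeats 2000000 in
theorem stmt_18 (C T : ℝ) (hC : 0 < C) (hT : 0 < T) :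
    ∃ C' : ℝ, 0 < C' ∧
      ∀ (N : ℕ) (k a : ℝ) (e : ℕ → ℝ),
        0 < k → (N : ℝ) * k ≤ T → 0 ≤ a →
        (∀ n ≤ N, 0 ≤ e n) → e 0 ≤ a →
        (∀ n, 1 ≤ n → n ≤ N →
          e n ≤ a + C * ∑ j ∈ Finset.Icc 1 n,
            k * (((n : ℝ) - (j : ℝ) + 1) * k) ^ (-(3 : ℝ) / 4) * e j) →
        C * k ^ ((1 : ℝ) / 4) * 4 < 1 / 2 →
        ∀ n ≤ N, e n ≤ C' * a := by
  classical
  obtain ⟨d, hd⟩ : ∃ d:ℝ, d = (32*C)⁻¹ := ⟨_, rfl⟩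
  have hd0 : 0 < d := by rw [hd]; positivity
  obtain ⟨c, hcdef⟩ : ∃ c:ℝ, c = 16*C*(32*C)^3 := ⟨_, rfl⟩
  have hc0 : 0 < c := by rw [hcdef]; positivity
  refine ⟨4*Real.exp (c*T), by positivity, ?_⟩
  intro N k a e hk hNk ha heN he0 hrec hsmall
  have hk14 : (0:ℝ) < k^((1:ℝ)/4) := Real.rpow_pos_of_pos hk _
  have hr1 : (1:ℝ) < 1 + c*k := by nlinarith
  have hCk : C * k^((1:ℝ)/4) ≤ 1/8 := by linarith
  have hd4pow : (d^(4:ℕ))^((1:ℝ)/4) = d := by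
    rw [← Real.rpow_natCast d 4, ← Real.rpow_mul hd0.le]
    norm_num
  have hd4neg : (d^(4:ℕ))^(-(3:ℝ)/4) = (d⁻¹)^(3:ℕ) := by
    rw [← Real.rpow_natCast d 4, ← Real.rpow_mul hd0.le,
      show ((4:ℕ):ℝ)*(-(3)/4) = -((3:ℕ):ℝ) by norm_num, Real.rpow_neg hd0.le,
      Real.rpow_natCast, inv_pow]
  -- main induction
  have key : ∀ n, n ≤ N → e n ≤ 4*a*(1+c*k)^n := by
    intro n
    induction n using Nat.strong_induction_on with
    | _ n ih =>
      intro hnN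
      rcases Nat.eq_zero_or_pos n with rfl | hn1
      · simpa using le_trans he0 (by nlinarith)
      obtain ⟨m, rfl⟩ := Nat.exists_eq_succ_of_ne_zero (Nat.pos_iff_ne_zero.mp hn1)
      set Fn : ℝ := 4*a*(1+c*k)^(m+1) with hFn
      have hFn1 : 4*a ≤ Fn := by
        rw [hFn]
        nlinarith [one_le_pow₀ (le_of_lt hr1) (n := m+1)]
      have hFn0 : 0 ≤ Fn := by positivity
      have hen0 : 0 ≤ e (m+1) := heN _ hnN
      set s : Finset ℕ := Finset.Icc 1 m with hs
      have hcast : ∀ j ∈ s, ((m+1:ℕ):ℝ) - (j:ℝ) + 1 = ((m+2-j : ℕ):ℝ) := by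
        intro j hj
        rw [hs, Finset.mem_Icc] at hj
        have h2 : (m+2-j : ℕ) = m+2-j := rfl
        push_cast [Nat.cast_sub (by omega : j ≤ m+2)]
        ring
      have hipos : ∀ j ∈ s, (0:ℝ) < ((m+2-j:ℕ):ℝ) := by
        intro j hj
        rw [hs, Finset.mem_Icc] at hj
        have : 1 ≤ m+2-j := by omega
        exact_mod_cast Nat.lt_of_lt_of_le Nat.zero_lt_one this
      -- pointwise e bound from IH
      have hej : ∀ j ∈ s, e j ≤ Fn := by
        intro j hj
        rw [hs, Finset.mem_Icc] at hj
        have h1 := ih j (by omega) (by omega)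
        have h2 : (1+c*k)^j ≤ (1+c*k)^(m+1) := pow_le_pow_right₀ hr1.le (by omega)
        rw [hFn]; nlinarith
      have hejr : ∀ j ∈ s, e j ≤ 4*a*(1+c*k)^j := by
        intro j hj
        rw [hs, Finset.mem_Icc] at hj
        exact ih j (by omega) (by omega)
      have hej0 : ∀ j ∈ s, 0 ≤ e j := by
        intro j hj
        rw [hs, Finset.mem_Icc] at hj
        exact heN j (by omega)
      -- split off top term of the recursion sum
      have hrec' := hrec (m+1) (by omega) hnN
      rw [Finset.sum_Icc_succ_top (by omega : 1 ≤ m+1)] at hrec'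
      have htop : k * (((((m+1:ℕ)) : ℝ) - (((m+1:ℕ)) : ℝ) + 1) * k) ^ (-(3 : ℝ) / 4) * e (m+1)
          = k^((1:ℝ)/4) * e (m+1) := by
        rw [show ((((m+1:ℕ)) : ℝ) - (((m+1:ℕ)) : ℝ) + 1) * k = k by push_cast; ring, kk k hk]
      rw [htop] at hrec'
      -- threshold predicate
      set P : ℕ → Prop := fun j => (((m+1:ℕ):ℝ) - (j:ℝ) + 1)*k ≤ d^(4:ℕ) with hP
      set f : ℕ → ℝ := fun j => k * ((((m+1:ℕ):ℝ) - (j:ℝ) + 1) * k) ^ (-(3 : ℝ) / 4) * e j with hf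
      have hsum_split : ∑ j ∈ s.filter P, f j + ∑ j ∈ s.filter (fun j => ¬ P j), f j
          = ∑ j ∈ s, f j := Finset.sum_filter_add_sum_filter_not s P f
      have hterm : ∀ j ∈ s, f j = k^((1:ℝ)/4) * ((m+2-j:ℕ):ℝ)^(-(3:ℝ)/4) * e j := by
        intro j hj
        show k * ((((m+1:ℕ):ℝ) - (j:ℝ) + 1) * k) ^ (-(3 : ℝ) / 4) * e j = _
        rw [hcast j hj, Real.mul_rpow (hipos j hj).le hk.le, ← kk k hk]
        ring
      -- recent part
      set M : ℕ := Nat.floor (d^(4:ℕ)/k) with hM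
      have hMsum : ∑ j ∈ s.filter P, ((m+2-j:ℕ):ℝ)^(-(3:ℝ)/4) ≤ 4*(M:ℝ)^((1:ℝ)/4) := by
        have hinj : ∀ j1 ∈ s.filter P, ∀ j2 ∈ s.filter P,
            m+2-j1 = m+2-j2 → j1 = j2 := by
          intro j1 hj1 j2 hj2 hh
          rw [Finset.mem_filter, hs, Finset.mem_Icc] at hj1 hj2
          omega
        have himg : ∑ i ∈ (s.filter P).image (fun j => m+2-j), ((i:ℕ):ℝ)^(-(3:ℝ)/4)
            = ∑ j ∈ s.filter P, ((m+2-j:ℕ):ℝ)^(-(3:ℝ)/4) := Finset.sum_image hinj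
        rw [← himg]
        have hsub : (s.filter P).image (fun j => m+2-j) ⊆ Finset.Icc 1 M := by
          intro i hi
          simp only [Finset.mem_image] at hi
          obtain ⟨j, hj, rfl⟩ := hi
          have hjs := Finset.mem_of_mem_filter j hj
          rw [Finset.mem_filter] at hj
          have hPj : (((m+1:ℕ):ℝ) - (j:ℝ) + 1)*k ≤ d^(4:ℕ) := hj.2
          rw [hcast j hjs] at hPj
          rw [hs, Finset.mem_Icc] at hjs
          rw [Finset.mem_Icc]
          constructor
          · omega
          · apply Nat.le_floor
            rw [le_div_iff₀ hk]
            exact hPj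
        calc ∑ i ∈ (s.filter P).image (fun j => m+2-j), ((i:ℕ):ℝ)^(-(3:ℝ)/4)
            ≤ ∑ i ∈ Finset.Icc 1 M, ((i:ℕ):ℝ)^(-(3:ℝ)/4) := by
              apply Finset.sum_le_sum_of_subset_of_nonneg hsub
              intro i _ _
              positivity
          _ ≤ 4*(M:ℝ)^((1:ℝ)/4) := telsum M
      have hMk : (M:ℝ)^((1:ℝ)/4) ≤ (d^(4:ℕ)/k)^((1:ℝ)/4) := by
        apply Real.rpow_le_rpow (Nat.cast_nonneg _) (Nat.floor_le (by positivity)) (by norm_num)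
      have hkd : k^((1:ℝ)/4) * (d^(4:ℕ)/k)^((1:ℝ)/4) = d := by
        rw [Real.div_rpow (by positivity) hk.le, hd4pow]
        field_simp
      have hR : ∑ j ∈ s.filter P, f j ≤ (4*d) * Fn := by
        calc ∑ j ∈ s.filter P, f j
            ≤ ∑ j ∈ s.filter P, (k^((1:ℝ)/4) * Fn) * ((m+2-j:ℕ):ℝ)^(-(3:ℝ)/4) := by
              apply Finset.sum_le_sum
              intro j hj
              have hjs := Finset.mem_of_mem_filter j hj
              rw [hterm j hjs]
              have h1 : 0 ≤ k^((1:ℝ)/4) * ((m+2-j:ℕ):ℝ)^(-(3:ℝ)/4) := by positivity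
              calc k^((1:ℝ)/4) * ((m+2-j:ℕ):ℝ)^(-(3:ℝ)/4) * e j
                  ≤ k^((1:ℝ)/4) * ((m+2-j:ℕ):ℝ)^(-(3:ℝ)/4) * Fn := by
                    rw [mul_assoc, mul_assoc]
                    exact mul_le_mul_of_nonneg_left (mul_le_mul_of_nonneg_left (hej j hjs)
                      (by positivity)) (by positivity)
                _ = (k^((1:ℝ)/4) * Fn) * ((m+2-j:ℕ):ℝ)^(-(3:ℝ)/4) := by ring
          _ = (k^((1:ℝ)/4) * Fn) * ∑ j ∈ s.filter P, ((m+2-j:ℕ):ℝ)^(-(3:ℝ)/4) :=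
              (Finset.mul_sum _ _ _).symm
          _ ≤ (k^((1:ℝ)/4) * Fn) * (4*(M:ℝ)^((1:ℝ)/4)) := by
              apply mul_le_mul_of_nonneg_left hMsum (by positivity)
          _ ≤ (k^((1:ℝ)/4) * Fn) * (4*(d^(4:ℕ)/k)^((1:ℝ)/4)) := by
              apply mul_le_mul_of_nonneg_left (by linarith) (by positivity)
          _ = (4*d) * Fn := by
              rw [show (k^((1:ℝ)/4) * Fn) * (4*(d^(4:ℕ)/k)^((1:ℝ)/4))
                = 4 * (k^((1:ℝ)/4) * (d^(4:ℕ)/k)^((1:ℝ)/4)) * Fn by ring, hkd]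
      -- old part
      have hO : ∑ j ∈ s.filter (fun j => ¬ P j), f j ≤ ((d⁻¹)^(3:ℕ)/c) * Fn := by
        calc ∑ j ∈ s.filter (fun j => ¬ P j), f j
            ≤ ∑ j ∈ s.filter (fun j => ¬ P j), (d⁻¹)^(3:ℕ) * k * (4*a*(1+c*k)^j) := by
              apply Finset.sum_le_sum
              intro j hj
              have hjs := Finset.mem_of_mem_filter j hj
              rw [Finset.mem_filter] at hj
              have hPj : d^(4:ℕ) < (((m+1:ℕ):ℝ) - (j:ℝ) + 1)*k := by
                have h9 : ¬ ((((m+1:ℕ):ℝ) - (j:ℝ) + 1)*k ≤ d^(4:ℕ)) := hj.2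
                linarith [not_le.mp h9]
              have hker : ((((m+1:ℕ):ℝ) - (j:ℝ) + 1)*k)^(-(3:ℝ)/4) ≤ (d⁻¹)^(3:ℕ) := by
                rw [← hd4neg]
                exact Real.rpow_le_rpow_of_nonpos (by positivity) hPj.le (by norm_num)
              calc k * ((((m+1:ℕ):ℝ) - (j:ℝ) + 1) * k) ^ (-(3 : ℝ) / 4) * e j
                  ≤ k * (d⁻¹)^(3:ℕ) * e j := by
                    apply mul_le_mul_of_nonneg_right _ (hej0 j hjs)
                    exact mul_le_mul_of_nonneg_left hker hk.le
                _ ≤ k * (d⁻¹)^(3:ℕ) * (4*a*(1+c*k)^j) :=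
                    mul_le_mul_of_nonneg_left (hejr j hjs) (by positivity)
                _ = (d⁻¹)^(3:ℕ) * k * (4*a*(1+c*k)^j) := by ring
          _ ≤ ∑ j ∈ s, (d⁻¹)^(3:ℕ) * k * (4*a*(1+c*k)^j) := by
              apply Finset.sum_le_sum_of_subset_of_nonneg (Finset.filter_subset _ _)
              intro j _ _
              positivity
          _ = ((d⁻¹)^(3:ℕ) * k * (4*a)) * ∑ j ∈ s, (1+c*k)^j := by
              rw [Finset.mul_sum]
              apply Finset.sum_congr rfl
              intro j _
              ring
          _ ≤ ((d⁻¹)^(3:ℕ) * k * (4*a)) * ((1+c*k)^(m+1)/((1+c*k)-1)) := by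
              apply mul_le_mul_of_nonneg_left _ (by positivity)
              rw [hs]
              exact geoms (1+c*k) hr1 m (m+1) (by omega)
          _ = ((d⁻¹)^(3:ℕ)/c) * Fn := by
              rw [show (1+c*k)-1 = c*k by ring, hFn]
              field_simp
      -- combine
      have hid1 : C*(4*d) = 1/8 := by
        rw [hd]
        field_simp
        ring
      have hid2 : C*((d⁻¹)^(3:ℕ)/c) = 1/16 := by
        rw [hd, hcdef, inv_inv]
        field_simp
      have hSb : ∑ j ∈ s, f j ≤ (4*d)*Fn + ((d⁻¹)^(3:ℕ)/c)*Fn := by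
        rw [← hsum_split]
        exact add_le_add hR hO
      have hCS : C * ∑ j ∈ s, f j ≤ (3/16)*Fn := by
        calc C * ∑ j ∈ s, f j ≤ C*((4*d)*Fn + ((d⁻¹)^(3:ℕ)/c)*Fn) :=
              mul_le_mul_of_nonneg_left hSb hC.le
          _ = (C*(4*d))*Fn + (C*((d⁻¹)^(3:ℕ)/c))*Fn := by ring
          _ = (3/16)*Fn := by rw [hid1, hid2]; ring
      have hke : C*(k^((1:ℝ)/4) * e (m+1)) ≤ (1/8) * e (m+1) := by
        calc C*(k^((1:ℝ)/4) * e (m+1)) = (C*k^((1:ℝ)/4)) * e (m+1) := by ring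
          _ ≤ (1/8) * e (m+1) := mul_le_mul_of_nonneg_right hCk hen0
      have hmuladd : C * (∑ j ∈ s, f j + k^((1:ℝ)/4) * e (m+1))
          = C * ∑ j ∈ s, f j + C*(k^((1:ℝ)/4) * e (m+1)) := by ring
      rw [← hs] at hrec'
      linarith [hrec', hmuladd, hCS, hke, hFn1, hFn0, hen0]
  -- conclude
  intro n hnN
  have h1 := key n hnN
  have h2 : (1+c*k)^n ≤ Real.exp (c*T) := by
    have h3 : (1+c*k)^n ≤ Real.exp (c*k)^n := by
      apply pow_le_pow_left₀ (by linarith)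
      linarith [Real.add_one_le_exp (c*k)]
    have h4 : Real.exp (c*k)^n = Real.exp ((n:ℝ)*(c*k)) := (Real.exp_nat_mul _ n).symm
    have h5 : (n:ℝ)*(c*k) ≤ c*T := by
      have h6 : (n:ℝ)*k ≤ (N:ℝ)*k := by
        apply mul_le_mul_of_nonneg_right _ hk.le
        exact_mod_cast hnN
      nlinarith
    calc (1+c*k)^n ≤ Real.exp (c*k)^n := h3
      _ = Real.exp ((n:ℝ)*(c*k)) := h4
      _ ≤ Real.exp (c*T) := Real.exp_le_exp.mpr h5
  calc e n ≤ 4*a*(1+c*k)^n := h1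
    _ ≤ 4*a*Real.exp (c*T) := by nlinarith [Real.exp_pos (c*T)]
    _ = 4*Real.exp (c*T) * a := by ring
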